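/- Reduction of the geodesic equation for plane curves to the Cauchy–Riemann equation: let f : ℝ → ℝ be smooth, 2π-periodic and everywhere positive, and let θ : ℝ → ℝ be smooth with θ′(s) = f(θ(s)) for all s. Let ε > 0 and let ι : ℝ × (−ε, ε) → ℂ be smooth and satisfy the geodesic family equation ∂ι/∂t(x, t) = i f(x) ∂ι/∂x(x, t) for all (x, t). Then the map u(s, t) := ι(θ(s), t) satisfies the Cauchy–Riemann equation ∂u/∂t(s,t) = i ∂u/∂s(s,t) for all (s,t); consequently the map w = s + it ↦ u(s,t), defined on the strip {w ∈ ℂ : |Im w| < ε}, is holomorphic. -/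

import Mathlib

open Real

/-- Reduction of the geodesic equation for plane curves to the Cauchy–Riemann equation:
if ι satisfies ∂ι/∂t = i f ∂ι/∂x and θ′ = f∘θ, then u(s,t) = ι(θ(s),t) satisfies
∂u/∂t = i ∂u/∂s, and hence w = s+it ↦ u(s,t) is holomorphic on the strip |Im w| < ε. -/
theorem geodesic_equation_reduces_to_cauchy_riemann
    (f : ℝ → ℝ) (hf : ContDiff ℝ (⊤ : ℕ∞) f)
    (hper : ∀ x : ℝ, f (x + 2 * π) = f x)
    (hpos : ∀ x : ℝ, 0 < f x)
    (θ : ℝ → ℝ) (hθ : ContDiff ℝ (⊤ : ℕ∞) θ)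
    (hθ' : ∀ s : ℝ, deriv θ s = f (θ s))
    (ε : ℝ) (hε : 0 < ε)
    (ι : ℝ → ℝ → ℂ)
    (hι : ContDiffOn ℝ (⊤ : ℕ∞) (fun p : ℝ × ℝ => ι p.1 p.2)
      (Set.univ ×ˢ Set.Ioo (-ε) ε))
    (hgeo : ∀ x : ℝ, ∀ t ∈ Set.Ioo (-ε) ε,
      deriv (fun t' => ι x t') t = Complex.I * (f x : ℂ) * deriv (fun x' => ι x' t) x) :
    (∀ s : ℝ, ∀ t ∈ Set.Ioo (-ε) ε,
      deriv (fun t' => ι (θ s) t') t = Complex.I * deriv (fun s' => ι (θ s') t) s) ∧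
    (∀ w : ℂ, |w.im| < ε →
      DifferentiableAt ℂ (fun w' : ℂ => ι (θ w'.re) w'.im) w) := by
  set G : ℝ × ℝ → ℂ := fun p => ι p.1 p.2 with hGdef
  have hU : IsOpen ((Set.univ : Set ℝ) ×ˢ Set.Ioo (-ε) ε) := isOpen_univ.prod isOpen_Ioo
  -- key facts about the fderiv of G at points of the strip
  have key : ∀ x : ℝ, ∀ t ∈ Set.Ioo (-ε) ε,
      HasFDerivAt G (fderiv ℝ G (x, t)) (x, t) ∧
      fderiv ℝ G (x, t) (1, 0) = deriv (fun x' => ι x' t) x ∧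
      fderiv ℝ G (x, t) (0, 1) = deriv (fun t' => ι x t') t := by
    intro x t ht
    have hmem : ((x, t) : ℝ × ℝ) ∈ (Set.univ : Set ℝ) ×ˢ Set.Ioo (-ε) ε := ⟨trivial, ht⟩
    have hd : DifferentiableAt ℝ G (x, t) :=
      (hι.contDiffAt (hU.mem_nhds hmem)).differentiableAt (by simp)
    have hD := hd.hasFDerivAt
    refine ⟨hD, ?_, ?_⟩
    · have h1 : HasDerivAt (fun x' : ℝ => ((x', t) : ℝ × ℝ)) ((1 : ℝ), (0 : ℝ)) x :=
        (hasDerivAt_id x).prodMk (hasDerivAt_const x t)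
      exact (hD.comp_hasDerivAt x h1).deriv.symm
    · have h2 : HasDerivAt (fun t' : ℝ => ((x, t') : ℝ × ℝ)) ((0 : ℝ), (1 : ℝ)) t :=
        (hasDerivAt_const t x).prodMk (hasDerivAt_id t)
      exact (hD.comp_hasDerivAt t h2).deriv.symm
  have hθd : ∀ s : ℝ, HasDerivAt θ (f (θ s)) s := by
    intro s
    have := (hθ.differentiable (by simp) s).hasDerivAt
    rwa [hθ' s] at this
  constructor
  · intro s t ht
    obtain ⟨hD, hDx, hDt⟩ := key (θ s) t ht
    have hcurve : HasDerivAt (fun s' : ℝ => ((θ s', t) : ℝ × ℝ)) ((f (θ s), 0)) s :=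
      (hθd s).prodMk (hasDerivAt_const s t)
    have hcomp : HasDerivAt (fun s' => ι (θ s') t)
        (fderiv ℝ G (θ s, t) (f (θ s), 0)) s := by have := hD.comp_hasDerivAt s hcurve; exact this
    have e1 : ((f (θ s) : ℝ), (0 : ℝ)) = f (θ s) • ((1 : ℝ), (0 : ℝ)) := by simp
    calc deriv (fun t' => ι (θ s) t') t
        = Complex.I * (f (θ s) : ℂ) * deriv (fun x' => ι x' t) (θ s) := hgeo (θ s) t ht
      _ = Complex.I * ((f (θ s) : ℝ) • deriv (fun x' => ι x' t) (θ s)) := by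
          rw [Complex.real_smul]; ring
      _ = Complex.I * fderiv ℝ G (θ s, t) (f (θ s), 0) := by
          rw [e1, map_smul, hDx]
      _ = Complex.I * deriv (fun s' => ι (θ s') t) s := by rw [hcomp.deriv]
  · intro w hw
    have ht : w.im ∈ Set.Ioo (-ε) ε := by
      constructor <;> [linarith [abs_lt.mp hw] ; exact (abs_lt.mp hw).2]
    set x := θ w.re with hx
    set t := w.im with htdef
    obtain ⟨hD, hDx, hDt⟩ := key x t ht
    set Dx : ℂ := fderiv ℝ G (x, t) (1, 0) with hDxdef
    set c : ℂ := (f x : ℂ) * Dx with hc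
    have hCR : fderiv ℝ G (x, t) (0, 1) = Complex.I * (f x : ℂ) * Dx := by
      rw [hDt, hDx]; exact hgeo x t ht
    -- real derivative of the inner map
    have hre : HasFDerivAt (fun w' : ℂ => θ w'.re)
        (f x • (Complex.reCLM : ℂ →L[ℝ] ℝ)) w :=
      (hθd w.re).comp_hasFDerivAt w Complex.reCLM.hasFDerivAt
    have hh : HasFDerivAt (fun w' : ℂ => ((θ w'.re, w'.im) : ℝ × ℝ))
        ((f x • (Complex.reCLM : ℂ →L[ℝ] ℝ)).prod (Complex.imCLM : ℂ →L[ℝ] ℝ)) w :=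
      hre.prodMk Complex.imCLM.hasFDerivAt
    have hu : HasFDerivAt (fun w' : ℂ => ι (θ w'.re) w'.im)
        ((fderiv ℝ G (x, t)).comp
          ((f x • (Complex.reCLM : ℂ →L[ℝ] ℝ)).prod (Complex.imCLM : ℂ →L[ℝ] ℝ))) w :=
      by have := hD.comp w hh; exact this
    have heq : ((ContinuousLinearMap.smulRight (1 : ℂ →L[ℂ] ℂ) c).restrictScalars ℝ)
        = (fderiv ℝ G (x, t)).comp
          ((f x • (Complex.reCLM : ℂ →L[ℝ] ℝ)).prod (Complex.imCLM : ℂ →L[ℝ] ℝ)) := by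
      apply ContinuousLinearMap.ext
      intro v
      have hv : ((f x * v.re, v.im) : ℝ × ℝ)
          = (f x * v.re) • ((1 : ℝ), (0 : ℝ)) + v.im • ((0 : ℝ), (1 : ℝ)) := by simp
      simp only [ContinuousLinearMap.coe_restrictScalars',
        ContinuousLinearMap.smulRight_apply, ContinuousLinearMap.one_apply,
        ContinuousLinearMap.coe_comp', Function.comp_apply,
        ContinuousLinearMap.prod_apply, ContinuousLinearMap.coe_smul',
        Pi.smul_apply, Complex.reCLM_apply, Complex.imCLM_apply, smul_eq_mul]
      rw [show ((f x * v.re, v.im) : ℝ × ℝ)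
          = (f x * v.re) • ((1 : ℝ), (0 : ℝ)) + v.im • ((0 : ℝ), (1 : ℝ)) from hv,
        map_add, map_smul, map_smul, ← hDxdef, hCR, hc]
      rw [Complex.real_smul, Complex.real_smul]
      conv_lhs => rw [← Complex.re_add_im v]
      push_cast
      ring
    have hC : HasFDerivAt (fun w' : ℂ => ι (θ w'.re) w'.im)
        (ContinuousLinearMap.smulRight (1 : ℂ →L[ℂ] ℂ) c) w :=
      hasFDerivAt_of_restrictScalars ℝ hu heq
    exact hC.differentiableAt
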